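/- Let q > 1 and α > 0 be real, and set p = q^{α+1/2}, Q = q^{1/2}. Then there exist no nonzero complex number κ and invertible diagonal 4×4 complex matrix C such that, with σ := κ·Ř⁴, both left quantum partial trace identities T(C, σ) = I₄ and T(C, σ^{−1}) = I₄ hold. -/

import Mathlib

open Matrix

noncomputable section

set_option maxHeartbeats 1000000

/-- The elementary matrix `E(a,b;c,d)` on `ℂ⁴ ⊗ ℂ⁴`. -/
def E (a b c d : Fin 4) : Matrix (Fin 4 × Fin 4) (Fin 4 × Fin 4) ℂ :=
  Matrix.single (a, b) (c, d) 1

/-- `M ⊗ I₄`, acting on the first two factors of `ℂ⁴ ⊗ ℂ⁴ ⊗ ℂ⁴`. -/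
def op12 (M : Matrix (Fin 4 × Fin 4) (Fin 4 × Fin 4) ℂ) :
    Matrix (Fin 4 × Fin 4 × Fin 4) (Fin 4 × Fin 4 × Fin 4) ℂ :=
  Matrix.of fun x y => M (x.1, x.2.1) (y.1, y.2.1) * (if x.2.2 = y.2.2 then 1 else 0)

/-- `I₄ ⊗ M`, acting on the last two factors of `ℂ⁴ ⊗ ℂ⁴ ⊗ ℂ⁴`. -/
def op23 (M : Matrix (Fin 4 × Fin 4) (Fin 4 × Fin 4) ℂ) :
    Matrix (Fin 4 × Fin 4 × Fin 4) (Fin 4 × Fin 4 × Fin 4) ℂ :=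
  Matrix.of fun x y => (if x.1 = y.1 then 1 else 0) * M (x.2.1, x.2.2) (y.2.1, y.2.2)

/-- The left quantum partial trace `T(C, M)_{a,b} = Σ_{c,d} C_{d,c} M_{(c,a),(d,b)}`. -/
def ptrace (C : Matrix (Fin 4) (Fin 4) ℂ) (M : Matrix (Fin 4 × Fin 4) (Fin 4 × Fin 4) ℂ) :
    Matrix (Fin 4) (Fin 4) ℂ :=
  Matrix.of fun a b => ∑ c : Fin 4, ∑ d : Fin 4, C d c * M (c, a) (d, b)

/-- The quantum R matrix `Ř⁴` (Case 4), with complex parameters `p, Q`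
(indices shifted from 1–4 to 0–3). -/
def R4 (p Q : ℂ) : Matrix (Fin 4 × Fin 4) (Fin 4 × Fin 4) ℂ :=
  E 0 0 0 0
  - (p ^ 2 * Q⁻¹ ^ 2) • (E 1 1 1 1 + E 2 2 2 2)
  + (p ^ 4) • E 3 3 3 3
  + (p * Q⁻¹) • (E 0 1 1 0 + E 0 2 2 0 + E 1 0 0 1 + E 2 0 0 2)
  + (p ^ 3 * Q⁻¹) • (E 1 3 3 1 + E 2 3 3 2 + E 3 1 1 3 + E 3 2 2 3)
  + (p ^ 2 * Q⁻¹ ^ 2) • (E 0 3 3 0 + E 3 0 0 3)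
  - (p ^ 2) • (E 1 2 2 1 + E 2 1 1 2)

lemma E_apply (a b c d x y z w : Fin 4) :
    E a b c d (x, y) (z, w) = if a = x ∧ b = y ∧ c = z ∧ d = w then 1 else 0 := by
  simp [E, Matrix.single, Prod.ext_iff, and_assoc]

/-- The coefficient table of `Ř⁴`. -/
def F (p Q : ℂ) : Matrix (Fin 4) (Fin 4) ℂ :=
  !![1, p * Q⁻¹, p * Q⁻¹, p ^ 2 * Q⁻¹ ^ 2;
     p * Q⁻¹, -(p ^ 2 * Q⁻¹ ^ 2), -(p ^ 2), p ^ 3 * Q⁻¹;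
     p * Q⁻¹, -(p ^ 2), -(p ^ 2 * Q⁻¹ ^ 2), p ^ 3 * Q⁻¹;
     p ^ 2 * Q⁻¹ ^ 2, p ^ 3 * Q⁻¹, p ^ 3 * Q⁻¹, p ^ 4]

/-- `Ř⁴` as a generalized permutation matrix. -/
def R4' (p Q : ℂ) : Matrix (Fin 4 × Fin 4) (Fin 4 × Fin 4) ℂ :=
  Matrix.of fun x y => F p Q x.1 x.2 * (if y.1 = x.2 ∧ y.2 = x.1 then 1 else 0)

lemma R4_eq (p Q : ℂ) : R4 p Q = R4' p Q := by
  ext ⟨a, b⟩ ⟨c, d⟩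
  simp only [R4, R4', Matrix.sub_apply, Matrix.add_apply, Matrix.smul_apply, smul_eq_mul,
    E_apply, Matrix.of_apply]
  fin_cases a <;> fin_cases b <;> fin_cases c <;> fin_cases d <;>
    simp [F]

lemma F_mul (p Q : ℂ) (hp : p ≠ 0) (hQ : Q ≠ 0) (a b : Fin 4) :
    F p Q a b * F p⁻¹ Q⁻¹ b a = 1 := by
  fin_cases a <;> fin_cases b <;> simp [F] <;> field_simp

lemma R4'_mul (p Q : ℂ) (hp : p ≠ 0) (hQ : Q ≠ 0) :
    R4' p Q * R4' p⁻¹ Q⁻¹ = 1 := by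
  ext x y
  rw [Matrix.mul_apply, Finset.sum_eq_single (x.2, x.1)]
  · by_cases h : y = x
    · subst h
      simp [R4', Matrix.one_apply, F_mul p Q hp hQ]
    · have h1 : ¬ (y.1 = x.1 ∧ y.2 = x.2) := fun ⟨u, v⟩ => h (Prod.ext u v)
      rw [Matrix.one_apply_ne (fun e => h e.symm)]
      simp [R4', h1]
  · intro z _ hz
    have : ¬ (z.1 = x.2 ∧ z.2 = x.1) := by
      intro ⟨h1, h2⟩; exact hz (Prod.ext h1 h2)
    simp [R4', this]
  · intro h; exact absurd (Finset.mem_univ _) h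

lemma ptrace_diag (d : Fin 4 → ℂ) (μ P Q' : ℂ) (a : Fin 4) :
    ptrace (Matrix.diagonal d) (μ • R4' P Q') a a = μ * (d a * F P Q' a a) := by
  fin_cases a <;>
    simp [ptrace, R4', Matrix.diagonal_apply, Fin.sum_univ_four, Matrix.smul_apply,
      smul_eq_mul, Matrix.of_apply] <;> ring

/-- For Case 4 there are no nonzero `κ` and invertible diagonal `C` making both left
quantum partial trace identities hold for `σ = κ·Ř⁴`. -/
theorem case4_no_ambient_invariant (q α : ℝ) (hq : 1 < q) (hα : 0 < α)
    (p Q : ℂ) (hp : p = ((q ^ (α + 1 / 2) : ℝ) : ℂ)) (hQ : Q = ((q ^ ((1 : ℝ) / 2) : ℝ) : ℂ)) :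
    ¬ ∃ (κ : ℂ) (d : Fin 4 → ℂ), κ ≠ 0 ∧ (∀ i, d i ≠ 0) ∧
        ptrace (Matrix.diagonal d) (κ • R4 p Q) = 1 ∧
        ptrace (Matrix.diagonal d) (κ • R4 p Q)⁻¹ = 1 := by
  rintro ⟨κ, d, hκ, hd, h1, h2⟩
  have hq0 : (0 : ℝ) < q := lt_trans zero_lt_one hq
  have hp0 : p ≠ 0 := by
    rw [hp]
    exact_mod_cast (Real.rpow_pos_of_pos hq0 _).ne'
  have hQ0 : Q ≠ 0 := by
    rw [hQ]
    exact_mod_cast (Real.rpow_pos_of_pos hq0 _).ne'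
  -- identify the inverse
  have hinv : (κ • R4 p Q)⁻¹ = κ⁻¹ • R4' p⁻¹ Q⁻¹ := by
    apply Matrix.inv_eq_right_inv
    rw [R4_eq, Matrix.smul_mul, Matrix.mul_smul, smul_smul, mul_inv_cancel₀ hκ, one_smul,
      R4'_mul p Q hp0 hQ0]
  rw [hinv] at h2
  rw [R4_eq] at h1
  have e0 : κ * (d 0 * F p Q 0 0) = 1 := by
    have := congrArg (fun M => M 0 0) h1
    simpa [ptrace_diag, Matrix.one_apply] using this
  have e3 : κ * (d 3 * F p Q 3 3) = 1 := by
    have := congrArg (fun M => M 3 3) h1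
    simpa [ptrace_diag, Matrix.one_apply] using this
  have f0 : κ⁻¹ * (d 0 * F p⁻¹ Q⁻¹ 0 0) = 1 := by
    have := congrArg (fun M => M 0 0) h2
    simpa [ptrace_diag, Matrix.one_apply] using this
  have f3 : κ⁻¹ * (d 3 * F p⁻¹ Q⁻¹ 3 3) = 1 := by
    have := congrArg (fun M => M 3 3) h2
    simpa [ptrace_diag, Matrix.one_apply] using this
  simp only [F, Matrix.cons_val', Matrix.cons_val_zero, Matrix.cons_val_fin_one,
    Matrix.cons_val_three, Matrix.empty_val', Matrix.cons_val_one, Matrix.head_cons,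
    Matrix.head_fin_const, Matrix.cons_val_two, Matrix.tail_cons, Matrix.head_val',
    Matrix.of_apply] at e0 e3 f0 f3
  -- now pure algebra: derive p ^ 8 = 1
  have hκi : κ⁻¹ ≠ 0 := inv_ne_zero hκ
  have hd0 : d 0 = κ := by
    field_simp at f0
    exact f0
  have hκκ : κ * κ = 1 := by
    rw [mul_one, hd0] at e0
    exact e0
  have hp8 : p ^ 8 = 1 := by
    field_simp at f3
    -- f3 should express d 3 in terms of κ, p
    have h : κ * κ * p ^ 8 = 1 := by linear_combination e3 - (κ * p ^ 4) * f3
    linear_combination h - p ^ 8 * hκκ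
  rw [hp] at hp8
  have hr : ((q ^ (α + 1 / 2) : ℝ)) ^ 8 = 1 := by exact_mod_cast hp8
  have hgt : 1 < q ^ (α + 1 / 2) :=
    (Real.one_lt_rpow_iff_of_pos hq0).mpr (Or.inl ⟨hq, by linarith⟩)
  exact absurd hr (one_lt_pow₀ hgt (by norm_num)).ne'
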